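/- Let n ≥ 1, ν > 0, T > 0, and let u : [0,T] × ℝⁿ → ℝⁿ be a bounded classical solution of the multivariate Burgers system, i.e. each component u_i is continuous and bounded, has a continuous bounded first time derivative and continuous bounded spatial derivatives up to second order, and ∂u_i/∂t = νΔu_i − Σ_{j=1}^n u_j ∂u_i/∂x_j holds pointwise with u(0,·) = h. Then max_{1≤j≤n} sup_{(t,x)∈[0,T]×ℝⁿ} |u_j(t,x)| ≤ max_{1≤j≤n} sup_{x∈ℝⁿ} |h_j(x)|. -/

import Mathlib

open MeasureTheory Set Filter Topology

noncomputable section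
set_option maxHeartbeats 1000000

/-- Spatial partial derivative in coordinate direction `j`. -/
noncomputable def pd {n : ℕ} (j : Fin n) (f : EuclideanSpace ℝ (Fin n) → ℝ)
    (x : EuclideanSpace ℝ (Fin n)) : ℝ :=
  fderiv ℝ f x (EuclideanSpace.single j 1)

noncomputable def qq {n : ℕ} (x : EuclideanSpace ℝ (Fin n)) : ℝ := ∑ j, (x j)^2

lemma qq_nonneg {n : ℕ} (x : EuclideanSpace ℝ (Fin n)) : 0 ≤ qq x :=
  Finset.sum_nonneg fun _ _ => sq_nonneg _

lemma qq_eq_norm {n : ℕ} (x : EuclideanSpace ℝ (Fin n)) : qq x = ‖x‖^2 := by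
  rw [EuclideanSpace.norm_eq, Real.sq_sqrt (by positivity)]
  simp [qq, Real.norm_eq_abs, sq_abs]

lemma qq_continuous {n : ℕ} : Continuous (qq (n := n)) := by
  have : qq (n := n) = fun x => ‖x‖^2 := funext qq_eq_norm
  rw [this]; exact (continuous_norm).pow 2

lemma pd_neg {n : ℕ} (j : Fin n) (f : EuclideanSpace ℝ (Fin n) → ℝ)
    (x : EuclideanSpace ℝ (Fin n)) : pd j (fun y => -(f y)) x = -pd j f x := by
  unfold pd
  rw [fderiv_fun_neg]
  simp

lemma pd_diff {n : ℕ} (j : Fin n) (f : EuclideanSpace ℝ (Fin n) → ℝ)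
    (hf : ContDiff ℝ 2 f) : Differentiable ℝ (pd j f) := by
  have h1 : ContDiff ℝ 1 (fderiv ℝ f) := hf.fderiv_right (by norm_num)
  have h2 : Differentiable ℝ (fderiv ℝ f) := h1.differentiable one_ne_zero
  exact fun x => ((h2 x).clm_apply (differentiableAt_const _))

lemma hasDerivAt_line {n : ℕ} (f : EuclideanSpace ℝ (Fin n) → ℝ)
    (hf : Differentiable ℝ f) (j : Fin n) (x₀ : EuclideanSpace ℝ (Fin n)) (s : ℝ) :
    HasDerivAt (fun s => f (x₀ + s • EuclideanSpace.single j 1))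
      (pd j f (x₀ + s • EuclideanSpace.single j 1)) s := by
  have hline : HasDerivAt (fun s : ℝ => x₀ + s • EuclideanSpace.single j (1:ℝ))
      (EuclideanSpace.single j 1) s := by
    simpa using ((hasDerivAt_id s).smul_const (EuclideanSpace.single j (1:ℝ))).const_add x₀
  exact ((hf _).hasFDerivAt).comp_hasDerivAt s hline

lemma qq_add_line {n : ℕ} (x : EuclideanSpace ℝ (Fin n)) (j : Fin n) (s : ℝ) :
    qq (x + s • EuclideanSpace.single j 1) = qq x + 2*s*(x j) + s^2 := by
  unfold qq
  have happ : ∀ k, (x + s • EuclideanSpace.single j (1:ℝ)) k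
      = x k + s * (if j = k then 1 else 0) := by
    intro k
    simp [EuclideanSpace.single_apply, eq_comm]
  have : ∀ k ∈ Finset.univ, ((x + s • EuclideanSpace.single j (1:ℝ)) k)^2
      = (x k)^2 + (if j = k then 2*s*(x j) + s^2 else 0) := by
    intro k _
    rw [happ k]
    by_cases hk : j = k
    · subst hk; simp; ring
    · simp [hk]
  rw [Finset.sum_congr rfl this, Finset.sum_add_distrib, Finset.sum_ite_eq]
  simp
  ring

lemma second_deriv_test (g g' : ℝ → ℝ) (g'' : ℝ)
    (hg : ∀ s, HasDerivAt g (g' s) s) (hg' : HasDerivAt g' g'' 0)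
    (hmax : IsLocalMax g 0) : g'' ≤ 0 := by
  by_contra hpos
  push_neg at hpos
  have hg'0 : g' 0 = 0 := hmax.hasDerivAt_eq_zero (hg 0)
  -- slope of g' tends to g'' > 0, so g' > 0 on a right neighborhood
  have hslope : Tendsto (slope g' 0) (𝓝[≠] 0) (𝓝 g'') :=
    hasDerivAt_iff_tendsto_slope.1 hg'
  have hev : ∀ᶠ s in 𝓝[≠] (0:ℝ), 0 < slope g' 0 s :=
    hslope.eventually (eventually_gt_nhds hpos)
  have hev' : ∀ᶠ s in 𝓝[>] (0:ℝ), 0 < g' s := by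
    have hsub : 𝓝[>] (0:ℝ) ≤ 𝓝[≠] (0:ℝ) :=
      nhdsWithin_mono _ fun s hs => ne_of_gt hs
    filter_upwards [hev.filter_mono hsub, self_mem_nhdsWithin] with s hs hs'
    have : slope g' 0 s = g' s / s := by simp [slope_def_field, hg'0]
    rw [this] at hs
    have hspos : (0:ℝ) < s := hs'
    rcases div_pos_iff.1 hs with ⟨h,_⟩ | ⟨_,h2⟩
    · exact h
    · linarith
  -- also local max eventually
  obtain ⟨δ, hδ, hδ'⟩ := Metric.mem_nhdsWithin_iff.1 hev'
  obtain ⟨δ₂, hδ₂, hδ₂'⟩ := Metric.eventually_nhds_iff.1 hmax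
  set d := min δ δ₂ / 2 with hd
  have hdpos : 0 < d := by positivity
  have hmono : StrictMonoOn g (Icc 0 d) := by
    apply strictMonoOn_of_deriv_pos (convex_Icc 0 d)
    · exact (Continuous.continuousOn (by
        exact (fun s => (hg s).differentiableAt) |> Differentiable.continuous))
    · intro s hs
      rw [interior_Icc] at hs
      rw [(hg s).deriv]
      apply hδ'
      constructor
      · simp only [Metric.mem_ball, Real.dist_eq, sub_zero, abs_of_pos hs.1]
        calc s < d := hs.2
          _ ≤ δ := by
            have := min_le_left δ δ₂; rw [hd]; linarith
      · exact hs.1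
  have h1 : g 0 < g d := hmono (by simp [hdpos.le]) (by simp [hdpos.le]) hdpos
  have h2 : g d ≤ g 0 := by
    apply hδ₂'
    simp [Real.dist_eq, abs_of_pos hdpos]
    calc d < min δ δ₂ := by rw [hd]; linarith [hdpos]
      _ ≤ δ₂ := min_le_right _ _
  linarith

lemma deriv_nonneg_at_max (g : ℝ → ℝ) (D t₀ T : ℝ) (h0 : 0 < t₀) (htT : t₀ ≤ T)
    (hd : HasDerivWithinAt g D (Icc 0 T) t₀)
    (hmax : ∀ s ∈ Icc (0:ℝ) T, g s ≤ g t₀) : 0 ≤ D := by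
  have hd' : HasDerivWithinAt g D (Icc 0 t₀) t₀ :=
    hd.mono (Icc_subset_Icc le_rfl htT)
  rw [hasDerivWithinAt_iff_tendsto_slope] at hd'
  have hset : Icc (0:ℝ) t₀ \ {t₀} = Ico 0 t₀ := Icc_sdiff_right
  rw [hset] at hd'
  have hne : (𝓝[Ico (0:ℝ) t₀] t₀).NeBot := by
    rw [← mem_closure_iff_nhdsWithin_neBot, closure_Ico h0.ne]
    exact ⟨h0.le, le_rfl⟩
  refine ge_of_tendsto hd' ?_
  filter_upwards [self_mem_nhdsWithin] with s hs
  have h1 : g s - g t₀ ≤ 0 := sub_nonpos.2 (hmax s ⟨hs.1, hs.2.le.trans htT⟩)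
  have h2 : s - t₀ < 0 := sub_neg.2 hs.2
  rw [slope_def_field]
  exact div_nonneg_iff.2 (Or.inr ⟨h1, h2.le⟩)

lemma core {n : ℕ} (ν T C M₀ : ℝ) (hν : 0 < ν) (hT : 0 < T) (hC : 0 ≤ C)
    (v vt : ℝ → EuclideanSpace ℝ (Fin n) → ℝ)
    (b : ℝ → EuclideanSpace ℝ (Fin n) → Fin n → ℝ)
    (hco : ContinuousOn (fun p : ℝ × EuclideanSpace ℝ (Fin n) => v p.1 p.2) (Icc 0 T ×ˢ univ))
    (hdt : ∀ x, ∀ t ∈ Icc (0:ℝ) T, HasDerivWithinAt (fun s => v s x) (vt t x) (Icc 0 T) t)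
    (hsp : ∀ t ∈ Icc (0:ℝ) T, ContDiff ℝ 2 (v t))
    (hvb : ∀ t ∈ Icc (0:ℝ) T, ∀ x, |v t x| ≤ C)
    (hbb : ∀ t ∈ Icc (0:ℝ) T, ∀ x j, |b t x j| ≤ C)
    (heq : ∀ t ∈ Icc (0:ℝ) T, ∀ x,
      vt t x = ν * (∑ j, pd j (pd j (v t)) x) - ∑ j, b t x j * pd j (v t) x)
    (h0 : ∀ x, v 0 x ≤ M₀) :
    ∀ t ∈ Icc (0:ℝ) T, ∀ x, v t x ≤ M₀ := by
  set lam : ℝ := 2*n*ν + n*C^2 + 1 with hlam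
  have hlampos : 0 < lam := by positivity
  -- key estimate with barrier
  have key : ∀ ε > 0, ∀ t ∈ Icc (0:ℝ) T, ∀ x,
      v t x ≤ M₀ + ε * (1 + qq x) * Real.exp (lam * t) := by
    intro ε hε t ht x
    set φ : ℝ × EuclideanSpace ℝ (Fin n) → ℝ :=
      fun p => v p.1 p.2 - ε * (1 + qq p.2) * Real.exp (lam * p.1) with hφ
    set R : ℝ := Real.sqrt ((2*C+1)/ε + 1) with hRdef
    have hRsq : R^2 = (2*C+1)/ε + 1 := Real.sq_sqrt (by positivity)
    set K : Set (ℝ × EuclideanSpace ℝ (Fin n)) := Icc 0 T ×ˢ Metric.closedBall 0 R with hK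
    have hKc : IsCompact K := (isCompact_Icc).prod (isCompact_closedBall 0 R)
    have h00K : ((0:ℝ), (0:EuclideanSpace ℝ (Fin n))) ∈ K :=
      ⟨left_mem_Icc.2 hT.le, Metric.mem_closedBall_self (Real.sqrt_nonneg _)⟩
    have hφc : ContinuousOn φ K := by
      apply ContinuousOn.sub
      · exact hco.mono (prod_mono_right (subset_univ _))
      · apply Continuous.continuousOn
        exact (continuous_const.mul ((continuous_const.add
          (qq_continuous.comp continuous_snd)))).mul
          ((Real.continuous_exp).comp (continuous_const.mul continuous_fst))
    obtain ⟨p₀, hp₀K, hp₀max⟩ := hKc.exists_isMaxOn ⟨_, h00K⟩ hφc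
    obtain ⟨t₀, x₀⟩ := p₀
    have ht₀ : t₀ ∈ Icc (0:ℝ) T := hp₀K.1
    -- exp ≥ 1 for t ≥ 0
    have hexp1 : ∀ s, 0 ≤ s → (1:ℝ) ≤ Real.exp (lam * s) := fun s hs =>
      Real.one_le_exp (by positivity)
    -- global maximum over the whole strip
    have hglob : ∀ t ∈ Icc (0:ℝ) T, ∀ x, φ (t, x) ≤ φ (t₀, x₀) := by
      intro t ht x
      by_cases hx : x ∈ Metric.closedBall (0:EuclideanSpace ℝ (Fin n)) R
      · exact isMaxOn_iff.1 hp₀max (t, x) ⟨ht, hx⟩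
      · -- far away: φ is very negative
        have hxn : R < ‖x‖ := by
          simpa [Metric.mem_closedBall, dist_eq_norm] using hx
        have hq : (2*C+1)/ε + 1 < qq x := by
          rw [qq_eq_norm, ← hRsq]
          exact pow_lt_pow_left₀ hxn (Real.sqrt_nonneg _) (by norm_num)
        have hvtx : v t x ≤ C := (abs_le.1 (hvb t ht x)).2
        have hv00 : -C ≤ v 0 0 := (abs_le.1 (hvb 0 (left_mem_Icc.2 hT.le) 0)).1
        have h1 : φ (t, x) ≤ C - ε * (1 + qq x) := by
          have he : (1:ℝ) ≤ Real.exp (lam * t) := hexp1 t ht.1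
          have hεq : 0 ≤ ε * (1 + qq x) := by
            have := qq_nonneg x; positivity
          have : ε * (1 + qq x) * 1 ≤ ε * (1 + qq x) * Real.exp (lam * t) :=
            mul_le_mul_of_nonneg_left he hεq
          simp only [hφ]; nlinarith
        have h2 : φ (0, 0) ≤ φ (t₀, x₀) := isMaxOn_iff.1 hp₀max _ h00K
        have h3 : -C - ε ≤ φ (0, 0) := by
          simp only [hφ]
          have hq0 : qq (0:EuclideanSpace ℝ (Fin n)) = 0 := by
            simp [qq]
          rw [hq0]
          simp
          linarith
        have h4 : ε * ((2*C+1)/ε) = 2*C+1 := by field_simp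
        nlinarith [mul_lt_mul_of_pos_left hq hε]
    rcases eq_or_lt_of_le ht₀.1 with hcase | hcase
    · -- max at t = 0 : conclude
      have h5 : φ (t₀, x₀) ≤ M₀ := by
        simp only [hφ]
        rw [← hcase]
        have : 0 ≤ ε * (1 + qq x₀) * Real.exp (lam * 0) := by
          have := qq_nonneg x₀; positivity
        linarith [h0 x₀]
      have h6 := hglob t ht x
      simp only [hφ] at h6 h5
      have hnn : 0 ≤ ε * (1 + qq x) * Real.exp (lam * t) := by
        have := qq_nonneg x; positivity
      linarith
    · -- interior (in time) maximum: contradiction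
      exfalso
      have hC2 : ContDiff ℝ 2 (v t₀) := hsp t₀ ht₀
      have hdv : Differentiable ℝ (v t₀) := hC2.differentiable (by norm_num)
      set c : ℝ := ε * Real.exp (lam * t₀) with hcdef
      have hc : 0 < c := by positivity
      -- spatial first and second derivative conditions at the max
      have hpd : ∀ j : Fin n, pd j (v t₀) x₀ = c * (2 * x₀ j) ∧
          pd j (pd j (v t₀)) x₀ ≤ 2 * c := by
        intro j
        set e1 := EuclideanSpace.single j (1:ℝ) with he1
        set G : ℝ → ℝ := fun s =>
          v t₀ (x₀ + s • e1) - c * ((1 + qq x₀) + (2*s*(x₀ j) + s^2)) with hG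
        set G' : ℝ → ℝ := fun s =>
          pd j (v t₀) (x₀ + s • e1) - c * (2*(x₀ j) + 2*s) with hG'
        have hpoly : ∀ s : ℝ, HasDerivAt
            (fun s : ℝ => c * ((1 + qq x₀) + (2*s*(x₀ j) + s^2))) (c * (2*(x₀ j) + 2*s)) s := by
          intro s
          have h1 : HasDerivAt (fun s : ℝ => (1 + qq x₀) + (2*s*(x₀ j) + s^2))
              (2*(x₀ j) + 2*s) s := by
            have ha : HasDerivAt (fun s : ℝ => 2*s*(x₀ j)) (2*(x₀ j)) s := by
              simpa using (((hasDerivAt_id s).const_mul (2:ℝ)).mul_const (x₀ j))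
            have hb : HasDerivAt (fun s : ℝ => s^2) (2*s) s := by
              simpa using hasDerivAt_pow 2 s
            simpa using (ha.add hb).const_add (1 + qq x₀)
          simpa using h1.const_mul c
        have hGd : ∀ s, HasDerivAt G (G' s) s := fun s =>
          (hasDerivAt_line (v t₀) hdv j x₀ s).sub (hpoly s)
        have hGφ : ∀ s, G s = φ (t₀, x₀ + s • e1) := by
          intro s
          simp only [hG, hφ]
          rw [qq_add_line]
          rw [hcdef]; ring
        have hGmax : IsLocalMax G 0 := by
          apply Filter.Eventually.of_forall
          intro s
          have h1 := hglob t₀ ht₀ (x₀ + s • e1)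
          have h2 : G 0 = φ (t₀, x₀) := by
            rw [hGφ 0]; norm_num
          rw [hGφ s, h2]; exact h1
        have hG'0 : G' 0 = 0 := hGmax.hasDerivAt_eq_zero (hGd 0)
        have hfst : pd j (v t₀) x₀ = c * (2 * x₀ j) := by
          simp only [hG', zero_smul, add_zero, mul_zero] at hG'0
          linarith
        have hG'd : HasDerivAt G' (pd j (pd j (v t₀)) x₀ - c*2) 0 := by
          have h1 := hasDerivAt_line (pd j (v t₀)) (pd_diff j _ hC2) j x₀ 0
          simp only [zero_smul, add_zero] at h1
          have h2 : HasDerivAt (fun s : ℝ => c * (2*(x₀ j) + 2*s)) (c*2) 0 := by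
            have : HasDerivAt (fun s : ℝ => 2*(x₀ j) + 2*s) (2:ℝ) 0 := by
              simpa using ((hasDerivAt_id (0:ℝ)).const_mul (2:ℝ)).const_add (2*(x₀ j))
            simpa using this.const_mul c
          exact h1.sub h2
        have hsnd := second_deriv_test G G' _ hGd hG'd hGmax
        exact ⟨hfst, by linarith⟩
      -- time derivative condition at the max
      have htime : 0 ≤ vt t₀ x₀ - ε * (1 + qq x₀) * (lam * Real.exp (lam * t₀)) := by
        set ψ : ℝ → ℝ := fun s => v s x₀ - ε * (1 + qq x₀) * Real.exp (lam * s) with hψ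
        have hexp : HasDerivAt (fun s : ℝ => Real.exp (lam * s))
            (lam * Real.exp (lam * t₀)) t₀ := by
          have h2 : HasDerivAt (fun s : ℝ => lam * s) lam t₀ := by
            simpa using (hasDerivAt_id t₀).const_mul lam
          have h3 := (Real.hasDerivAt_exp (lam * t₀)).comp t₀ h2
          rw [mul_comm]
          exact h3
        have hψd : HasDerivWithinAt ψ
            (vt t₀ x₀ - ε * (1 + qq x₀) * (lam * Real.exp (lam * t₀))) (Icc 0 T) t₀ := by
          apply HasDerivWithinAt.sub (hdt x₀ t₀ ht₀)
          exact ((hexp.const_mul (ε * (1 + qq x₀))).hasDerivWithinAt)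
        have hψmax : ∀ s ∈ Icc (0:ℝ) T, ψ s ≤ ψ t₀ := by
          intro s hs
          have := hglob s hs x₀
          simp only [hφ] at this
          simp only [hψ]
          linarith
        exact deriv_nonneg_at_max ψ _ t₀ T hcase ht₀.2 hψd hψmax
      -- combine with the PDE
      have heqt := heq t₀ ht₀ x₀
      set q0 : ℝ := qq x₀ with hq0
      have hq0n : 0 ≤ q0 := qq_nonneg x₀
      have hsum1 : (∑ j, pd j (pd j (v t₀)) x₀) ≤ (n:ℝ) * (2*c) := by
        calc (∑ j, pd j (pd j (v t₀)) x₀) ≤ ∑ _j : Fin n, 2*c :=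
              Finset.sum_le_sum (fun j _ => (hpd j).2)
          _ = (n:ℝ) * (2*c) := by
              rw [Finset.sum_const, Finset.card_univ, Fintype.card_fin, nsmul_eq_mul]
      have hsum2 : -(c * ((n:ℝ)*C^2 + q0)) ≤ ∑ j, b t₀ x₀ j * pd j (v t₀) x₀ := by
        have hterm : ∀ j : Fin n, -(c * (C^2 + (x₀ j)^2)) ≤ b t₀ x₀ j * pd j (v t₀) x₀ := by
          intro j
          rw [(hpd j).1]
          have hb1 := abs_le.1 (hbb t₀ ht₀ x₀ j)
          have h2 : -(C^2 + (x₀ j)^2) ≤ b t₀ x₀ j * (2 * x₀ j) := by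
            nlinarith [sq_nonneg (b t₀ x₀ j + x₀ j), hb1.1, hb1.2]
          nlinarith [mul_le_mul_of_nonneg_left h2 hc.le]
        calc -(c * ((n:ℝ)*C^2 + q0)) = ∑ j : Fin n, -(c * (C^2 + (x₀ j)^2)) := by
              rw [Finset.sum_neg_distrib, ← Finset.mul_sum, Finset.sum_add_distrib,
                Finset.sum_const, Finset.card_univ, Fintype.card_fin, nsmul_eq_mul, hq0, qq]
          _ ≤ ∑ j, b t₀ x₀ j * pd j (v t₀) x₀ := Finset.sum_le_sum (fun j _ => hterm j)
      have hn0 : (0:ℝ) ≤ (n:ℝ) := Nat.cast_nonneg n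
      have hA1 : 0 ≤ (n:ℝ) * ν * (c * q0) :=
        mul_nonneg (mul_nonneg hn0 hν.le) (mul_nonneg hc.le hq0n)
      have hA2 : 0 ≤ (n:ℝ) * C^2 * (c * q0) :=
        mul_nonneg (mul_nonneg hn0 (sq_nonneg C)) (mul_nonneg hc.le hq0n)
      have h1 : vt t₀ x₀ ≤ ν * ((n:ℝ)*(2*c)) + c*((n:ℝ)*C^2 + q0) := by
        rw [heqt]
        have := mul_le_mul_of_nonneg_left hsum1 hν.le
        linarith [hsum2]
      have h2 : ε * (1 + q0) * (lam * Real.exp (lam * t₀)) = lam * (c * (1 + q0)) := by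
        rw [hcdef]; ring
      rw [h2, hlam] at htime
      nlinarith [h1, htime, hA1, hA2, hc]
  -- pass to the limit ε → 0
  intro t ht x
  by_contra hcon
  push_neg at hcon
  set A : ℝ := (1 + qq x) * Real.exp (lam * t) with hA
  have hApos : 0 < A := by
    have := qq_nonneg x
    positivity
  set ε : ℝ := (v t x - M₀) / (2 * A) with hε
  have hεpos : 0 < ε := by
    apply div_pos (by linarith) (by positivity)
  have hk := key ε hεpos t ht x
  have : ε * (1 + qq x) * Real.exp (lam * t) = (v t x - M₀) / 2 := by
    rw [hε, hA]
    have hq1 : (1 + qq x) ≠ 0 := by have := qq_nonneg x; positivity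
    field_simp
  rw [this] at hk
  linarith

lemma pd_pd_neg {n : ℕ} (k j : Fin n) (f : EuclideanSpace ℝ (Fin n) → ℝ)
    (x : EuclideanSpace ℝ (Fin n)) :
    pd k (pd j (fun y => -(f y))) x = - pd k (pd j f) x := by
  have h : (pd j fun y => -(f y)) = (fun y => -(pd j f y)) := funext fun y => pd_neg j f y
  rw [h, pd_neg k (pd j f) x]

/-- a priori maximum estimate for bounded classical solutions of the
multivariate Burgers system on `[0,T] × ℝⁿ`:
`max_j sup_{[0,T]×ℝⁿ} |u_j| ≤ max_j sup_{ℝⁿ} |h_j|`. -/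
theorem burgers_maximum_principle
    (n : ℕ) (hn : 1 ≤ n) (ν T : ℝ) (hν : 0 < ν) (hT : 0 < T)
    (u ut : ℝ → EuclideanSpace ℝ (Fin n) → Fin n → ℝ)
    (h : Fin n → EuclideanSpace ℝ (Fin n) → ℝ)
    -- regularity: components of class C^{1,2}_b on [0,T] × ℝⁿ
    (hco : ∀ i, ContinuousOn (fun p : ℝ × EuclideanSpace ℝ (Fin n) => u p.1 p.2 i)
      (Icc 0 T ×ˢ univ))
    (hdt : ∀ i x, ∀ t ∈ Icc (0:ℝ) T,
      HasDerivWithinAt (fun s => u s x i) (ut t x i) (Icc 0 T) t)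
    (hct : ∀ i, ContinuousOn (fun p : ℝ × EuclideanSpace ℝ (Fin n) => ut p.1 p.2 i)
      (Icc 0 T ×ˢ univ))
    (hsp : ∀ i, ∀ t ∈ Icc (0:ℝ) T, ContDiff ℝ 2 (fun x => u t x i))
    (hc1 : ∀ i j, ContinuousOn
      (fun p : ℝ × EuclideanSpace ℝ (Fin n) => pd j (fun y => u p.1 y i) p.2)
      (Icc 0 T ×ˢ univ))
    (hc2 : ∀ i j k, ContinuousOn
      (fun p : ℝ × EuclideanSpace ℝ (Fin n) => pd k (pd j (fun y => u p.1 y i)) p.2)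
      (Icc 0 T ×ˢ univ))
    -- boundedness of u, its time derivative and its spatial derivatives up to order two
    (hbd : ∃ C : ℝ, ∀ t ∈ Icc (0:ℝ) T, ∀ x i,
      |u t x i| ≤ C ∧ |ut t x i| ≤ C ∧
      (∀ j, |pd j (fun y => u t y i) x| ≤ C) ∧
      (∀ j k, |pd k (pd j (fun y => u t y i)) x| ≤ C))
    -- the Burgers equation
    (heq : ∀ t ∈ Icc (0:ℝ) T, ∀ x i,
      ut t x i = ν * (∑ j, pd j (pd j (fun y => u t y i)) x)
        - ∑ j, u t x j * pd j (fun y => u t y i) x)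
    -- initial data
    (hinit : ∀ x i, u 0 x i = h i x) :
    (⨆ j : Fin n, ⨆ t : Icc (0:ℝ) T, ⨆ x : EuclideanSpace ℝ (Fin n), |u ↑t x j|)
      ≤ ⨆ j : Fin n, ⨆ x : EuclideanSpace ℝ (Fin n), |h j x| := by
  obtain ⟨C, hCbd⟩ := hbd
  have hzero : (0:ℝ) ∈ Icc (0:ℝ) T := left_mem_Icc.2 hT.le
  haveI hne : Nonempty (Fin n) := Fin.pos_iff_nonempty.1 hn
  haveI hneI : Nonempty (Icc (0:ℝ) T) := ⟨⟨0, hzero⟩⟩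
  have i0 : Fin n := ⟨0, hn⟩
  have hC0 : 0 ≤ C := le_trans (abs_nonneg _) ((hCbd 0 hzero 0 i0).1)
  set R : ℝ := ⨆ j : Fin n, ⨆ x : EuclideanSpace ℝ (Fin n), |h j x| with hR
  have hbdd1 : ∀ j, BddAbove (range fun x : EuclideanSpace ℝ (Fin n) => |h j x|) := by
    intro j
    refine ⟨C, ?_⟩
    rintro _ ⟨x, rfl⟩
    show |h j x| ≤ C
    rw [← hinit x j]
    exact (hCbd 0 hzero x j).1
  have hhR : ∀ j x, |h j x| ≤ R := by
    intro j x
    refine le_trans (le_ciSup (hbdd1 j) x) ?_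
    exact le_ciSup (f := fun j : Fin n => ⨆ x : EuclideanSpace ℝ (Fin n), |h j x|)
      (Set.Finite.bddAbove (Set.finite_range _)) j
  have hkey : ∀ i, ∀ t ∈ Icc (0:ℝ) T, ∀ x, |u t x i| ≤ R := by
    intro i
    have hpos : ∀ t ∈ Icc (0:ℝ) T, ∀ x, u t x i ≤ R := by
      refine core ν T C R hν hT hC0 (fun t x => u t x i) (fun t x => ut t x i)
        (fun t x j => u t x j) (hco i) (fun x t ht => hdt i x t ht)
        (fun t ht => hsp i t ht) (fun t ht x => (hCbd t ht x i).1)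
        (fun t ht x j => (hCbd t ht x j).1) (fun t ht x => heq t ht x i) ?_
      intro x
      show u 0 x i ≤ R
      rw [hinit x i]
      exact (le_abs_self _).trans (hhR i x)
    have hneg : ∀ t ∈ Icc (0:ℝ) T, ∀ x, -(u t x i) ≤ R := by
      refine core ν T C R hν hT hC0 (fun t x => -(u t x i)) (fun t x => -(ut t x i))
        (fun t x j => u t x j) ((hco i).neg) (fun x t ht => (hdt i x t ht).neg)
        (fun t ht => (hsp i t ht).neg) ?_
        (fun t ht x j => (hCbd t ht x j).1) ?_ ?_
      · intro t ht x
        show |-(u t x i)| ≤ C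
        rw [abs_neg]
        exact (hCbd t ht x i).1
      · intro t ht x
        show -(ut t x i) = _
        have hbase := heq t ht x i
        have e2 : ∀ j : Fin n, pd j (pd j (fun y => -(u t y i))) x
            = - pd j (pd j (fun y => u t y i)) x := fun j => pd_pd_neg j j _ x
        have e1 : ∀ j : Fin n, pd j (fun y => -(u t y i)) x
            = - pd j (fun y => u t y i) x := fun j => pd_neg j _ x
        calc -(ut t x i)
            = -(ν * (∑ j, pd j (pd j (fun y => u t y i)) x)
              - ∑ j, u t x j * pd j (fun y => u t y i) x) := by rw [hbase]
          _ = ν * (∑ j, pd j (pd j (fun y => -(u t y i))) x)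
              - ∑ j, u t x j * pd j (fun y => -(u t y i)) x := by
            simp only [e1, e2, mul_neg, Finset.sum_neg_distrib]
            ring
      · intro x
        show -(u 0 x i) ≤ R
        rw [hinit x i]
        exact (neg_le_abs _).trans (hhR i x)
    intro t ht x
    exact abs_le.2 ⟨by linarith [hneg t ht x], hpos t ht x⟩
  refine ciSup_le fun j => ciSup_le fun t => ciSup_le fun x => hkey j t.1 t.2 x
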